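/- Let g ≥ 1 and let Π_g be the fundamental group of a closed orientable surface of genus g, that is, the presented group on generators a_1, b_1, …, a_g, b_g with the single relator (a_1 b_1 a_1⁻¹ b_1⁻¹)⋯(a_g b_g a_g⁻¹ b_g⁻¹). If there exists a surjective group homomorphism from Π_g onto a free group of finite rank r, then r ≤ g. -/

import Mathlib

open scoped commutatorElement

/-- The single relator `(a₁b₁a₁⁻¹b₁⁻¹)⋯(a_g b_g a_g⁻¹ b_g⁻¹)` of the genus-`g` surface group,
in the free group on generators `Sum.inl i = aᵢ` and `Sum.inr i = bᵢ`. -/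
def surfaceRelator (g : ℕ) : FreeGroup (Fin g ⊕ Fin g) :=
  (List.ofFn fun i : Fin g =>
    ⁅FreeGroup.of (Sum.inl i : Fin g ⊕ Fin g), FreeGroup.of (Sum.inr i : Fin g ⊕ Fin g)⁆).prod

/-- The genus-`g` surface group `Π_g`, presented on `2g` generators with the single
relator `∏ᵢ [aᵢ, bᵢ]`. -/
def SurfaceGroup (g : ℕ) : Type :=
  PresentedGroup ({surfaceRelator g} : Set (FreeGroup (Fin g ⊕ Fin g)))

instance (g : ℕ) : Group (SurfaceGroup g) := by
  unfold SurfaceGroup; infer_instance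


/-! ### Auxiliary: Heisenberg-type group attached to a bilinear form -/

section Heis
variable {V : Type} [AddCommGroup V] [Module ℚ V]

/-- Heisenberg-type group attached to a bilinear form. -/
def Heis (_ω : V →ₗ[ℚ] V →ₗ[ℚ] ℚ) : Type := V × ℚ

variable (ω : V →ₗ[ℚ] V →ₗ[ℚ] ℚ)

instance : Group (Heis ω) where
  mul p q := (p.1 + q.1, p.2 + q.2 + ω p.1 q.1)
  one := ((0 : V), (0 : ℚ))
  inv p := (-p.1, -p.2 + ω p.1 p.1)
  mul_assoc p q r := by
    refine Prod.ext ?_ ?_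
    · exact add_assoc _ _ _
    · show p.2 + q.2 + ω p.1 q.1 + r.2 + ω (p.1 + q.1) r.1
        = p.2 + (q.2 + r.2 + ω q.1 r.1) + ω p.1 (q.1 + r.1)
      simp only [map_add, LinearMap.add_apply]
      ring
  one_mul p := by
    refine Prod.ext ?_ ?_
    · exact zero_add _
    · show 0 + p.2 + ω 0 p.1 = p.2
      simp
  mul_one p := by
    refine Prod.ext ?_ ?_
    · exact add_zero _
    · show p.2 + 0 + ω p.1 0 = p.2
      simp
  inv_mul_cancel p := by
    refine Prod.ext ?_ ?_
    · exact neg_add_cancel _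
    · show -p.2 + ω p.1 p.1 + p.2 + ω (-p.1) p.1 = 0
      simp only [map_neg, LinearMap.neg_apply]
      ring

lemma Heis.mul_def (p q : Heis ω) : p * q = (p.1 + q.1, p.2 + q.2 + ω p.1 q.1) := rfl
lemma Heis.inv_def (p : Heis ω) : p⁻¹ = (-p.1, -p.2 + ω p.1 p.1) := rfl
lemma Heis.one_def : (1 : Heis ω) = ((0 : V), (0 : ℚ)) := rfl

/-- The element `(x, c)` of the Heisenberg-type group. -/
def Heis.mk (x : V) (c : ℚ) : Heis ω := (x, c)

/-- Central elements. -/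
def Heis.z (c : ℚ) : Heis ω := ((0 : V), c)

lemma Heis.commutator (p q : Heis ω) :
    ⁅p, q⁆ = Heis.z ω (ω p.1 q.1 - ω q.1 p.1) := by
  show p * q * p⁻¹ * q⁻¹ = _
  simp only [Heis.mul_def, Heis.inv_def]
  refine Prod.ext ?_ ?_
  · show p.1 + q.1 + -p.1 + -q.1 = 0
    abel
  · show p.2 + q.2 + ω p.1 q.1 + (-p.2 + ω p.1 p.1) + ω (p.1 + q.1) (-p.1)
        + (-q.2 + ω q.1 q.1) + ω (p.1 + q.1 + -p.1) (-q.1) = ω p.1 q.1 - ω q.1 p.1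
    simp only [map_add, map_neg, LinearMap.add_apply, LinearMap.neg_apply]
    ring

/-- Projection to the first factor, as a group hom into `Multiplicative V`. -/
def Heis.fst : Heis ω →* Multiplicative V where
  toFun p := Multiplicative.ofAdd p.1
  map_one' := rfl
  map_mul' _ _ := rfl

lemma Heis.list_prod (l : List ℚ) :
    (l.map (Heis.z ω)).prod = Heis.z ω l.sum := by
  induction l with
  | nil => rfl
  | cons c l ihl =>
    rw [List.map_cons, List.prod_cons, ihl, Heis.mul_def]
    show (_, _) = (_, _)
    simp [Heis.z]

end Heis

/-! ### Auxiliary: the linear algebra lemma -/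

open Submodule Module in
lemma key_la : ∀ (g : ℕ) (V : Type) [AddCommGroup V] [Module ℚ V] [FiniteDimensional ℚ V]
    (u v : Fin g → V),
    (∀ ω : V →ₗ[ℚ] V →ₗ[ℚ] ℚ, (∀ x, ω x x = 0) → ∑ i, ω (u i) (v i) = 0) →
    Submodule.span ℚ (Set.range u ∪ Set.range v) = ⊤ →
    Module.finrank ℚ V ≤ g := by
  intro g
  induction g with
  | zero =>
    intro V _ _ _ u v _ hspan
    have he : Set.range u ∪ Set.range v = (∅ : Set V) := by
      simp [Set.range_eq_empty]
    rw [he, Submodule.span_empty] at hspan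
    rw [← finrank_top ℚ V, ← hspan, finrank_bot]
  | succ g ih =>
    intro V _ _ _ u v hsum hspan
    classical
    set e : V := if u (Fin.last g) = 0 then v (Fin.last g) else u (Fin.last g) with he
    set U : Submodule ℚ V := ℚ ∙ e with hU
    set q : V →ₗ[ℚ] V ⧸ U := U.mkQ with hq
    have hqe : q e = 0 := by
      rw [hq, Submodule.mkQ_apply, Submodule.Quotient.mk_eq_zero]
      exact Submodule.mem_span_singleton_self e
    set u' : Fin g → V ⧸ U := fun i => q (u i.castSucc) with hu'
    set v' : Fin g → V ⧸ U := fun i => q (v i.castSucc) with hv'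
    have hqu : q (u (Fin.last g)) = 0 := by
      by_cases h : u (Fin.last g) = 0
      · rw [h, map_zero]
      · rw [show u (Fin.last g) = e by rw [he, if_neg h]]
        exact hqe
    have hqv : q (v (Fin.last g)) ∈ span ℚ (Set.range u' ∪ Set.range v') := by
      by_cases h : u (Fin.last g) = 0
      · rw [show v (Fin.last g) = e by rw [he, if_pos h], hqe]
        exact Submodule.zero_mem _
      · have heu : e = u (Fin.last g) := by rw [he, if_neg h]
        have hene : e ≠ 0 := heu ▸ h
        obtain ⟨φ, hφ⟩ : ∃ φ : Module.Dual ℚ V, φ e ≠ 0 := by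
          by_contra hc
          push_neg at hc
          exact hene ((Module.forall_dual_apply_eq_zero_iff ℚ e).mp hc)
        set f : Module.Dual ℚ V := (φ e)⁻¹ • φ with hf
        have hfe : f e = 1 := by
          rw [hf]; simp [inv_mul_cancel₀ hφ]
        have hw : ∑ i, (f (u i) • v i - f (v i) • u i) = 0 := by
          rw [← Module.forall_dual_apply_eq_zero_iff ℚ]
          intro ψ
          have hω := hsum (LinearMap.mk₂ ℚ (fun x y => f x * ψ y - ψ x * f y)
            (by intro x x' y; simp [map_add]; ring)
            (by intro c x y; simp; ring)
            (by intro x y y'; simp [map_add]; ring)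
            (by intro c x y; simp; ring))
            (by intro x; simp [mul_comm])
          simp only [LinearMap.mk₂_apply] at hω
          rw [map_sum]
          rw [← hω]
          congr 1
          ext i
          simp [mul_comm]
        rw [Fin.sum_univ_castSucc] at hw
        have hvl : f (u (Fin.last g)) • v (Fin.last g) =
            f (v (Fin.last g)) • u (Fin.last g)
              - ∑ i : Fin g, (f (u i.castSucc) • v i.castSucc - f (v i.castSucc) • u i.castSucc) := by
          rw [eq_sub_iff_add_eq, ← sub_eq_zero, ← hw]; abel
        have hfu : f (u (Fin.last g)) = 1 := heu ▸ hfe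
        rw [hfu, one_smul] at hvl
        rw [hvl]
        rw [map_sub, map_smul, ← heu, hqe, smul_zero, zero_sub, map_sum]
        refine Submodule.neg_mem _ (Submodule.sum_mem _ fun i _ => ?_)
        rw [map_sub, map_smul, map_smul]
        exact Submodule.sub_mem _
          (Submodule.smul_mem _ _ (Submodule.subset_span (Or.inr ⟨i, rfl⟩)))
          (Submodule.smul_mem _ _ (Submodule.subset_span (Or.inl ⟨i, rfl⟩)))
    have hsum' : ∀ ω : (V ⧸ U) →ₗ[ℚ] (V ⧸ U) →ₗ[ℚ] ℚ, (∀ x, ω x x = 0) →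
        ∑ i, ω (u' i) (v' i) = 0 := by
      intro ω hω
      have := hsum (ω.compl₁₂ q q) (fun x => hω (q x))
      rw [Fin.sum_univ_castSucc] at this
      simp only [LinearMap.compl₁₂_apply] at this
      rw [hqu] at this
      simpa using this
    have hspan' : span ℚ (Set.range u' ∪ Set.range v') = ⊤ := by
      rw [eq_top_iff]
      have : (⊤ : Submodule ℚ (V ⧸ U)) = Submodule.map q ⊤ := by
        rw [Submodule.map_top, Submodule.range_mkQ]
      rw [this, ← hspan, Submodule.map_span]
      refine Submodule.span_le.mpr ?_
      rintro x ⟨y, hy, rfl⟩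
      rcases hy with ⟨i, rfl⟩ | ⟨i, rfl⟩
      · rcases Fin.eq_castSucc_or_eq_last i with ⟨j, rfl⟩ | rfl
        · exact Submodule.subset_span (Or.inl ⟨j, rfl⟩)
        · rw [hqu]; exact Submodule.zero_mem _
      · rcases Fin.eq_castSucc_or_eq_last i with ⟨j, rfl⟩ | rfl
        · exact Submodule.subset_span (Or.inr ⟨j, rfl⟩)
        · exact hqv
    have h1 := ih (V ⧸ U) u' v' hsum' hspan'
    have h2 : finrank ℚ (V ⧸ U) + finrank ℚ U = finrank ℚ V :=
      Submodule.finrank_quotient_add_finrank U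
    have h3 : finrank ℚ U ≤ 1 := by
      by_cases hz : e = 0
      · rw [hU, hz, Submodule.span_zero_singleton, finrank_bot]
        omega
      · rw [hU, finrank_span_singleton hz]
    omega

/-- If the genus-`g` surface group (`g ≥ 1`) surjects onto a free group of rank `r`,
then `r ≤ g`. -/
theorem surfaceGroup_surj_freeGroup_rank_le (g r : ℕ) (hg : 1 ≤ g)
    (h : ∃ f : SurfaceGroup g →* FreeGroup (Fin r), Function.Surjective f) :
    r ≤ g := by
  classical
  obtain ⟨f, hf⟩ := h
  set N : Subgroup (FreeGroup (Fin g ⊕ Fin g)) :=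
    Subgroup.normalClosure ({surfaceRelator g} : Set (FreeGroup (Fin g ⊕ Fin g))) with hN
  let mk : FreeGroup (Fin g ⊕ Fin g) →* SurfaceGroup g := QuotientGroup.mk' N
  have hmk : Function.Surjective mk := QuotientGroup.mk'_surjective N
  have hrel : mk (surfaceRelator g) = 1 := by
    show (QuotientGroup.mk' N) (surfaceRelator g) = 1
    rw [QuotientGroup.mk'_apply, QuotientGroup.eq_one_iff]
    exact Subgroup.subset_normalClosure (Set.mem_singleton _)
  let π : FreeGroup (Fin r) →* Multiplicative (Fin r → ℚ) :=
    FreeGroup.lift fun i => Multiplicative.ofAdd (Pi.single i (1 : ℚ))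
  set A : Fin g → (Fin r → ℚ) :=
    fun i => Multiplicative.toAdd (π (f (mk (FreeGroup.of (Sum.inl i))))) with hA
  set B : Fin g → (Fin r → ℚ) :=
    fun i => Multiplicative.toAdd (π (f (mk (FreeGroup.of (Sum.inr i))))) with hB
  -- key sum identity for every alternating form
  have hsum : ∀ ω : (Fin r → ℚ) →ₗ[ℚ] (Fin r → ℚ) →ₗ[ℚ] ℚ, (∀ x, ω x x = 0) →
      ∑ i, ω (A i) (B i) = 0 := by
    intro ω hω
    have hskew : ∀ a b, ω b a = -ω a b := by
      intro a b
      have := hω (a + b)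
      simp only [map_add, LinearMap.add_apply, hω a, hω b] at this
      linarith
    let θ : FreeGroup (Fin r) →* Heis ω :=
      FreeGroup.lift fun i => Heis.mk ω (Pi.single i (1 : ℚ)) 0
    have hcompat : ∀ w : FreeGroup (Fin r), (θ w).1 = Multiplicative.toAdd (π w) := by
      have hh : (Heis.fst ω).comp θ = π := by
        apply FreeGroup.ext_hom
        intro i
        show Heis.fst ω (θ (FreeGroup.of i)) = π (FreeGroup.of i)
        rw [show θ (FreeGroup.of i) = Heis.mk ω (Pi.single i (1:ℚ)) 0 from FreeGroup.lift_apply_of,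
          show π (FreeGroup.of i) = Multiplicative.ofAdd (Pi.single i (1:ℚ)) from FreeGroup.lift_apply_of]
        rfl
      intro w
      have := DFunLike.congr_fun hh w
      simpa [Heis.fst] using congrArg Multiplicative.toAdd this
    let ψ : FreeGroup (Fin g ⊕ Fin g) →* Heis ω := θ.comp (f.comp mk)
    have h1 : ψ (surfaceRelator g) = 1 := by
      show θ (f (mk (surfaceRelator g))) = 1
      rw [hrel, map_one, map_one]
    rw [surfaceRelator, map_list_prod, List.map_ofFn] at h1
    have h2 : (fun i : Fin g => ψ ⁅FreeGroup.of (Sum.inl i : Fin g ⊕ Fin g),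
          FreeGroup.of (Sum.inr i : Fin g ⊕ Fin g)⁆)
        = fun i => Heis.z ω (ω (A i) (B i) - ω (B i) (A i)) := by
      funext i
      rw [map_commutatorElement, Heis.commutator]
      have e1 : (ψ (FreeGroup.of (Sum.inl i))).1 = A i := hcompat _
      have e2 : (ψ (FreeGroup.of (Sum.inr i))).1 = B i := hcompat _
      rw [e1, e2]
    rw [show (⇑ψ ∘ fun i : Fin g => ⁅FreeGroup.of (Sum.inl i : Fin g ⊕ Fin g),
        FreeGroup.of (Sum.inr i : Fin g ⊕ Fin g)⁆)
      = fun i => Heis.z ω (ω (A i) (B i) - ω (B i) (A i)) from h2] at h1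
    rw [show (List.ofFn fun i : Fin g => Heis.z ω (ω (A i) (B i) - ω (B i) (A i)))
      = (List.ofFn fun i : Fin g => (ω (A i) (B i) - ω (B i) (A i))).map (Heis.z ω)
      from List.map_ofFn.symm, Heis.list_prod] at h1
    have h3 : (List.ofFn fun i : Fin g => (ω (A i) (B i) - ω (B i) (A i))).sum = 0 := by
      have := congrArg Prod.snd h1
      simpa [Heis.z, Heis.one_def] using this
    rw [List.sum_ofFn] at h3
    have h4 : ∑ i : Fin g, (2 : ℚ) * ω (A i) (B i) = 0 := by
      rw [← h3]
      congr 1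
      funext i
      rw [hskew (A i) (B i)]
      ring
    rw [← Finset.mul_sum] at h4
    linarith
  -- spanning
  have hspan : Submodule.span ℚ (Set.range A ∪ Set.range B) = ⊤ := by
    set S : Subgroup (Multiplicative (Fin r → ℚ)) :=
      AddSubgroup.toSubgroup (Submodule.span ℚ (Set.range A ∪ Set.range B)).toAddSubgroup with hS
    have hmemS : ∀ x : Multiplicative (Fin r → ℚ),
        Multiplicative.toAdd x ∈ Submodule.span ℚ (Set.range A ∪ Set.range B) → x ∈ S :=
      fun _ hx => hx
    have hmemS' : ∀ x : Multiplicative (Fin r → ℚ),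
        x ∈ S → Multiplicative.toAdd x ∈ Submodule.span ℚ (Set.range A ∪ Set.range B) :=
      fun _ hx => hx
    have hmem : ∀ w : FreeGroup (Fin g ⊕ Fin g), π (f (mk w)) ∈ S := by
      intro w
      have htop : w ∈ Subgroup.closure (Set.range (FreeGroup.of : (Fin g ⊕ Fin g) → _)) := by
        rw [FreeGroup.closure_range_of]; trivial
      have hle : Subgroup.closure (Set.range (FreeGroup.of : (Fin g ⊕ Fin g) → _))
          ≤ S.comap (π.comp (f.comp mk)) := by
        rw [Subgroup.closure_le]
        rintro x ⟨s, rfl⟩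
        rcases s with i | i
        · exact hmemS _ (Submodule.subset_span (Or.inl ⟨i, rfl⟩))
        · exact hmemS _ (Submodule.subset_span (Or.inr ⟨i, rfl⟩))
      exact hle htop
    have hsingle : ∀ j : Fin r,
        Pi.single j (1 : ℚ) ∈ Submodule.span ℚ (Set.range A ∪ Set.range B) := by
      intro j
      obtain ⟨x, hx⟩ := hf (FreeGroup.of j)
      obtain ⟨w, rfl⟩ := hmk x
      have := hmem w
      rw [hx] at this
      rw [show π (FreeGroup.of j) = Multiplicative.ofAdd (Pi.single j (1:ℚ))
        from FreeGroup.lift_apply_of] at this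
      exact hmemS' _ this
    rw [eq_top_iff, ← (Pi.basisFun ℚ (Fin r)).span_eq, Submodule.span_le]
    rintro x ⟨j, rfl⟩
    rw [Pi.basisFun_apply]
    exact hsingle j
  have := key_la g (Fin r → ℚ) A B hsum hspan
  simpa [Module.finrank_pi] using this
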